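/- arXiv:math/0310125 — 3 statements merged into one kernel-verified Lean document; each statement's English description precedes it below -/
import Mathlib

section
/- Let k be a subfield of a field f and let G be a subgroup of the multiplicative group f* such that k* ≤ G. Assume that the quotient group G/k* is torsion; that k contains a primitive 4th root of unity whenever G/k* has an element of order 4; that for every prime p lying both in π(t(G)) and in π(G/k*) the field k contains a primitive p-th root of unity; and that the characteristic of k does not belong to π(G/k*). If g ∈ G \ k* and the image of g in the quotient group G/k* has order t, then the field extension k(g) of k has degree [k(g):k] = t. -/
open scoped IntermediateField

/-- The image of `Kˣ` in `Fˣ` under the algebra map, i.e. the subgroup `k*` of `f*`. -/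
def fieldUnitsRange (K F : Type*) [Field K] [Field F] [Algebra K F] : Subgroup Fˣ :=
  (Units.map (algebraMap K F : K →+* F).toMonoidHom).range

open Polynomial IntermediateField

universe u

theorem aux_two_pow (e : ℕ) : ∀ (K : Type u) [Field K] (ζ : K), IsPrimitiveRoot ζ 4 →
    ∀ a : K, (∀ b : K, b ^ 2 ≠ a) → Irreducible (X ^ (2 ^ e) - C a) := by
  induction e with
  | zero => intro K _ ζ hζ a ha; simpa using irreducible_X_sub_C a
  | succ e IH =>
    intro K _ ζ hζ a ha
    have h2 : Irreducible (X ^ 2 - C a) := X_pow_sub_C_irreducible_of_prime Nat.prime_two ha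
    rw [pow_succ]
    apply X_pow_mul_sub_C_irreducible h2
    intro E _ _ x hx
    have hint : IsIntegral K x := not_not.mp fun h ↦ by
      simpa only [degree_zero, degree_X_pow_sub_C Nat.prime_two.pos,
        WithBot.natCast_ne_bot] using congr_arg degree (hx.symm.trans (dif_neg h))
    have hζ' : IsPrimitiveRoot (algebraMap K K⟮x⟯ ζ) 4 :=
      hζ.map_of_injective (algebraMap K K⟮x⟯).injective
    apply IH _ _ hζ'
    intro b hb
    have hsq : ζ ^ 2 = -1 :=
      (hζ.pow (by norm_num) (by norm_num : (4:ℕ) = 2 * 2)).eq_neg_one_of_two_right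
    apply ha (ζ * Algebra.norm K b)
    have : (Algebra.norm K b) ^ 2 = Algebra.norm K (AdjoinSimple.gen K x) := by
      rw [← map_pow, hb]
    rw [← adjoin.powerBasis_gen hint, Algebra.PowerBasis.norm_gen_eq_coeff_zero_minpoly] at this
    simp only [adjoin.powerBasis_gen, adjoin.powerBasis_dim, minpoly_gen, hx] at this
    rw [mul_pow, hsq, this]
    simp [hx]

/-- Lemma 1.1. -/
theorem degree_adjoin_eq_order_in_quotient
    (K F : Type*) [Field K] [Field F] [Algebra K F] (G : Subgroup Fˣ)
    (hKG : fieldUnitsRange K F ≤ G)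
    -- the quotient group G/k* is torsion
    (htors : ∀ x : G ⧸ (fieldUnitsRange K F).subgroupOf G, IsOfFinOrder x)
    -- k contains a primitive 4th root of unity whenever G/k* has an element of order 4
    (h4 : (∃ x : G ⧸ (fieldUnitsRange K F).subgroupOf G, orderOf x = 4) →
      ∃ ζ : K, IsPrimitiveRoot ζ 4)
    -- for every prime p in π(t(G)) ∩ π(G/k*), k contains a primitive p-th root of unity
    (hp : ∀ p : ℕ, p.Prime → (∃ g : G, IsOfFinOrder g ∧ p ∣ orderOf g) →
      (∃ x : G ⧸ (fieldUnitsRange K F).subgroupOf G, p ∣ orderOf x ∧ x ≠ 1) →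
      ∃ ζ : K, IsPrimitiveRoot ζ p)
    -- the characteristic of k does not belong to π(G/k*)
    (hchar : ∀ p : ℕ, p.Prime →
      (∃ x : G ⧸ (fieldUnitsRange K F).subgroupOf G, p ∣ orderOf x ∧ x ≠ 1) →
      ringChar K ≠ p)
    -- g ∈ G \ k*
    (g : Fˣ) (hgG : g ∈ G) (hgk : g ∉ fieldUnitsRange K F)
    -- the image of g in G/k* has order t
    (t : ℕ)
    (ht : orderOf ((⟨g, hgG⟩ : G) : G ⧸ (fieldUnitsRange K F).subgroupOf G) = t) :
    Module.finrank K K⟮((g : F))⟯ = t := by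
  set N := (fieldUnitsRange K F).subgroupOf G with hN
  set x : G ⧸ N := ((⟨g, hgG⟩ : G) : G ⧸ N) with hx
  -- basic facts about t
  have ht0 : t ≠ 0 := by
    rw [← ht]; exact (htors x).orderOf_pos.ne'
  -- powers of g landing in k*
  have hmkpow : ∀ s : ℕ, x ^ s = (((⟨g, hgG⟩ : G) ^ s : G) : G ⧸ N) := fun s => rfl
  have hmem_iff : ∀ s : ℕ, x ^ s = 1 ↔ g ^ s ∈ fieldUnitsRange K F := by
    intro s
    rw [hmkpow, QuotientGroup.eq_one_iff, Subgroup.mem_subgroupOf]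
    rfl
  -- g^t ∈ k*
  have hgt : g ^ t ∈ fieldUnitsRange K F := by
    rw [← hmem_iff, ← ht]; exact pow_orderOf_eq_one x
  obtain ⟨c, hc⟩ := hgt
  set a : K := (c : K) with ha
  have halg : algebraMap K F a = (g : F) ^ t := by
    have := congrArg (Units.val) hc
    simpa using this
  have ha0 : a ≠ 0 := c.ne_zero
  -- for s < t, g^s ∉ k*
  have hnot : ∀ s : ℕ, s ≠ 0 → s < t → g ^ s ∉ fieldUnitsRange K F := by
    intro s hs0 hst hmem
    have h1 : x ^ s = 1 := (hmem_iff s).mpr hmem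
    have := orderOf_dvd_of_pow_eq_one h1
    rw [ht] at this
    exact absurd (Nat.le_of_dvd (Nat.pos_of_ne_zero hs0) this) (not_le.mpr hst)
  -- order of x^s for s ∣ t
  have horderpow : ∀ s : ℕ, s ≠ 0 → s ∣ t → orderOf (x ^ s) = t / s := by
    intro s hs0 hst
    rw [orderOf_pow' x hs0, ht, Nat.gcd_eq_right hst]
  -- THE KEY: a has no p-th root for any prime p dividing t
  have key : ∀ p : ℕ, p.Prime → p ∣ t → ∀ b : K, b ^ p ≠ a := by
    intro p pp hpt b hb
    have hs : p * (t / p) = t := Nat.mul_div_cancel' hpt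
    set s := t / p with hsdef
    have hs0 : s ≠ 0 := by
      intro h; rw [h, mul_zero] at hs; exact ht0 hs.symm
    have hslt : s < t := by
      rw [← hs]
      exact lt_mul_of_one_lt_left (Nat.pos_of_ne_zero hs0) pp.one_lt
    have hb0 : b ≠ 0 := by
      intro h; rw [h, zero_pow pp.ne_zero] at hb; exact ha0 hb.symm
    set u : Kˣ := Units.mk0 b hb0 with hu
    set v : Fˣ := Units.map (algebraMap K F : K →+* F).toMonoidHom u with hv
    have hvmem : v ∈ fieldUnitsRange K F := ⟨u, rfl⟩
    have hvp : v ^ p = g ^ t := by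
      ext
      simp only [hv, hu, Units.val_pow_eq_pow_val, Units.coe_map, MonoidHom.coe_coe,
        Units.val_mk0]
      rw [← map_pow, hb]; exact halg
    set h : Fˣ := g ^ s * v⁻¹ with hh
    have hhp : h ^ p = 1 := by
      rw [hh, mul_pow, ← pow_mul, mul_comm s p, hs, inv_pow, hvp, mul_inv_cancel]
    have hhG : h ∈ G := mul_mem (pow_mem hgG s) (inv_mem (hKG hvmem))
    have hh1 : h ≠ 1 := by
      intro h1
      rw [hh, mul_inv_eq_one] at h1
      exact hnot s hs0 hslt (h1 ▸ hvmem)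
    have horder : orderOf h = p := by
      rcases (Nat.Prime.eq_one_or_self_of_dvd pp _ (orderOf_dvd_of_pow_eq_one hhp)) with h1 | h1
      · exact absurd (orderOf_eq_one_iff.mp h1) hh1
      · exact h1
    have hT : ∃ gg : G, IsOfFinOrder gg ∧ p ∣ orderOf gg := by
      refine ⟨⟨h, hhG⟩, ?_, ?_⟩
      · refine isOfFinOrder_iff_pow_eq_one.mpr ⟨p, pp.pos, ?_⟩
        exact Subtype.ext (by push_cast; exact hhp)
      · have h1 : orderOf (⟨h, hhG⟩ : G) = p :=
          (orderOf_injective G.subtype Subtype.coe_injective ⟨h, hhG⟩).symm.trans horder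
        rw [h1]
    have hQ : ∃ y : G ⧸ N, p ∣ orderOf y ∧ y ≠ 1 := by
      refine ⟨x ^ s, ?_, ?_⟩
      · rw [horderpow s hs0 ⟨p, by rw [← hs, mul_comm]⟩, ← hs,
          Nat.mul_div_cancel _ (Nat.pos_of_ne_zero hs0)]
      · intro h1
        exact hnot s hs0 hslt ((hmem_iff s).mp h1)
    obtain ⟨ζ, hζ⟩ := hp p pp hT hQ
    haveI : NeZero p := ⟨pp.ne_zero⟩
    have hζ' : IsPrimitiveRoot (algebraMap K F ζ) p :=
      hζ.map_of_injective (algebraMap K F).injective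
    have hhF : ((h : F)) ^ p = 1 := by
      have := congrArg Units.val hhp; push_cast at this; exact this
    obtain ⟨i, _, hi⟩ := hζ'.eq_pow_of_pow_eq_one hhF
    obtain ⟨w, hw⟩ := hζ.isUnit pp.ne_zero
    have hhmem : h ∈ fieldUnitsRange K F := by
      refine ⟨w ^ i, ?_⟩
      ext
      simp only [Units.coe_map, MonoidHom.coe_coe, Units.val_pow_eq_pow_val, hw]
      rw [map_pow]
      exact hi
    have : g ^ s ∈ fieldUnitsRange K F := by
      have : h * v = g ^ s := by rw [hh, inv_mul_cancel_right]
      exact this ▸ mul_mem hhmem hvmem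
    exact hnot s hs0 hslt this
  -- integrality and degree setup
  have hint : IsIntegral K ((g : F)) := by
    refine ⟨X ^ t - C a, monic_X_pow_sub_C a ht0, ?_⟩
    rw [eval₂_sub, eval₂_pow, eval₂_X, eval₂_C, halg, sub_self]
  haveI : FiniteDimensional K K⟮(g : F)⟯ := IntermediateField.adjoin.finiteDimensional hint
  have hd_eq : Module.finrank K K⟮(g : F)⟯ = (minpoly K ((g : F))).natDegree :=
    IntermediateField.adjoin.finrank hint
  set d := Module.finrank K K⟮(g : F)⟯ with hd
  have hdvd : minpoly K ((g : F)) ∣ X ^ t - C a := by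
    apply minpoly.dvd
    rw [map_sub, map_pow, aeval_X, aeval_C, halg, sub_self]
  have hdle : d ≤ t := by
    rw [hd_eq]
    exact (natDegree_le_of_dvd hdvd
      (X_pow_sub_C_ne_zero (Nat.pos_of_ne_zero ht0) a)).trans_eq natDegree_X_pow_sub_C
  have hd0 : d ≠ 0 := by rw [hd_eq]; exact (minpoly.natDegree_pos hint).ne'
  -- for each prime p dividing t, p ^ (t.factorization p) divides d
  have hppdvd : ∀ p : ℕ, p.Prime → p ∣ t → p ^ t.factorization p ∣ d := by
    intro p pp hpt
    set e := t.factorization p with he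
    have he0 : e ≠ 0 := (Nat.Prime.factorization_pos_of_dvd pp ht0 hpt).ne'
    have hpet : p ^ e ∣ t := Nat.ordProj_dvd t p
    obtain ⟨s, hs⟩ := hpet
    have hirr : Irreducible (X ^ p ^ e - C a) := by
      by_cases hp2 : p = 2
      · subst hp2
        rcases Nat.lt_or_ge e 2 with hee | hee
        · have he1 : e = 1 := by omega
          rw [he1, pow_one]
          exact X_pow_sub_C_irreducible_of_prime Nat.prime_two (key 2 Nat.prime_two hpt)
        · have h4dvd : (4 : ℕ) ∣ t := by
            refine dvd_trans ?_ ⟨s, hs⟩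
            calc (4 : ℕ) = 2 ^ 2 := by norm_num
            _ ∣ 2 ^ e := pow_dvd_pow 2 hee
          have h40 : t / 4 ≠ 0 :=
            Nat.div_ne_zero_iff_of_dvd h4dvd |>.mpr ⟨ht0, by norm_num⟩
          obtain ⟨ζ4, hζ4⟩ := h4 ⟨x ^ (t / 4), by
            rw [horderpow _ h40 (Nat.div_dvd_of_dvd h4dvd)]
            exact Nat.div_div_self h4dvd ht0⟩
          exact aux_two_pow e K ζ4 hζ4 a (key 2 Nat.prime_two hpt)
      · exact X_pow_sub_C_irreducible_of_prime_pow pp hp2 e (key p pp hpt)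
    have hroot : ((g : F) ^ s) ^ p ^ e = algebraMap K F a := by
      rw [← pow_mul, mul_comm s (p ^ e), ← hs, halg]
    have hmp : minpoly K ((g : F) ^ s) = X ^ p ^ e - C a :=
      (minpoly.eq_of_irreducible_of_monic hirr
        (by rw [map_sub, aeval_X_pow, aeval_C, hroot, sub_self])
        (monic_X_pow_sub_C a (pow_ne_zero e pp.ne_zero))).symm
    have hmem : (g : F) ^ s ∈ K⟮(g : F)⟯ :=
      pow_mem (IntermediateField.mem_adjoin_simple_self K ((g : F))) s
    have hx' : IsIntegral K (⟨(g : F) ^ s, hmem⟩ : K⟮(g : F)⟯) := IsIntegral.of_finite K _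
    have hdeg := minpoly.degree_dvd hx'
    have hnat : (minpoly K (⟨(g : F) ^ s, hmem⟩ : K⟮(g : F)⟯)).natDegree = p ^ e := by
      rw [show minpoly K (⟨(g : F) ^ s, hmem⟩ : K⟮(g : F)⟯) = minpoly K ((g : F) ^ s) from
        (minpoly.algebraMap_eq (algebraMap K⟮(g : F)⟯ F).injective _).symm, hmp,
        natDegree_X_pow_sub_C]
    rwa [hnat] at hdeg
  have htd : t ∣ d := by
    rw [← Nat.factorization_le_iff_dvd ht0 hd0]
    intro p
    by_cases pp : p.Prime
    · by_cases hpt : p ∣ t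
      · exact (Nat.Prime.pow_dvd_iff_le_factorization pp hd0).mp (hppdvd p pp hpt)
      · simp [Nat.factorization_eq_zero_of_not_dvd hpt]
    · simp [Nat.factorization_eq_zero_of_not_prime _ pp]
  exact le_antisymm hdle (Nat.le_of_dvd (Nat.pos_of_ne_zero hd0) htd)
end

section
/- Let k be a subfield of a field f and let G be a subgroup of the multiplicative group f* such that k* ≤ G. Assume that the quotient group G/k* is torsion; that k contains a primitive 4th root of unity whenever G/k* has an element of order 4; that for every prime p lying both in π(t(G)) and in π(G/k*) the field k contains a primitive p-th root of unity; and that the characteristic of k does not belong to π(G/k*). If |G/k*| = p^m for a prime p and a nonnegative integer m, then [k(G):k] = p^m. -/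
set_option maxHeartbeats 1000000
set_option synthInstance.maxHeartbeats 400000

open Polynomial IntermediateField

namespace KneserAux

variable {K F : Type*} [Field K] [Field F] [Algebra K F]

lemma mem_A_of_map {u : Fˣ} {k : K} (h : algebraMap K F k = (u : F)) :
    u ∈ fieldUnitsRange K F := by
  have hk : k ≠ 0 := by
    rintro rfl
    exact u.ne_zero (by simpa using h.symm)
  refine ⟨Units.mk0 k hk, Units.ext ?_⟩
  simpa using h

lemma exists_map_of_mem_A {u : Fˣ} (h : u ∈ fieldUnitsRange K F) :
    ∃ k : K, algebraMap K F k = (u : F) := by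
  obtain ⟨k, rfl⟩ := h
  exact ⟨(k : K), by simp⟩

variable {G : Subgroup Fˣ}

/-- The class of a unit of `G` in `G ⧸ k*`. -/
def mkQ (K : Type*) [Field K] [Algebra K F] {G : Subgroup Fˣ} {u : Fˣ} (hu : u ∈ G) :
    G ⧸ (fieldUnitsRange K F).subgroupOf G :=
  QuotientGroup.mk ⟨u, hu⟩

lemma mkQ_eq_one_iff {u : Fˣ} (hu : u ∈ G) :
    mkQ K hu = 1 ↔ u ∈ fieldUnitsRange K F := by
  rw [mkQ, QuotientGroup.eq_one_iff, Subgroup.mem_subgroupOf]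

lemma mkQ_pow {u : Fˣ} (hu : u ∈ G) (n : ℕ) :
    mkQ K (pow_mem hu n) = (mkQ K hu) ^ n := by
  have h1 : (⟨u ^ n, pow_mem hu n⟩ : G) = (⟨u, hu⟩ : G) ^ n := by
    ext; simp
  rw [mkQ, h1, mkQ]
  exact map_pow (QuotientGroup.mk' _) _ n

lemma mkQ_mul {u v : Fˣ} (hu : u ∈ G) (hv : v ∈ G) :
    mkQ K (mul_mem hu hv) = mkQ K hu * mkQ K hv := rfl

lemma mkQ_inv {u : Fˣ} (hu : u ∈ G) :
    mkQ K (inv_mem hu) = (mkQ K hu)⁻¹ := rfl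

lemma orderOf_mkQ_pow {u : Fˣ} (hu : u ∈ G) {p e j : ℕ} (hprime : p.Prime)
    (horder : orderOf (mkQ K hu) = p ^ e) (hj : j ≤ e) :
    orderOf (mkQ K (pow_mem hu (p ^ j))) = p ^ (e - j) := by
  rw [mkQ_pow hu, orderOf_pow' _ (pow_ne_zero j hprime.ne_zero), horder,
    Nat.gcd_eq_right (pow_dvd_pow p hj), Nat.pow_div hj hprime.pos]

lemma not_mem_A_of_orderOf_ne_one {u : Fˣ} (hu : u ∈ G) (h : orderOf (mkQ K hu) ≠ 1) :
    u ∉ fieldUnitsRange K F :=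
  fun hA => h (orderOf_eq_one_iff.mpr ((mkQ_eq_one_iff hu).mpr hA))

section Killer

variable (hKG : fieldUnitsRange K F ≤ G)
variable (h4 : (∃ x : G ⧸ (fieldUnitsRange K F).subgroupOf G, orderOf x = 4) →
      ∃ ζ : K, IsPrimitiveRoot ζ 4)
variable (hp : ∀ p : ℕ, p.Prime → (∃ g : G, IsOfFinOrder g ∧ p ∣ orderOf g) →
      (∃ x : G ⧸ (fieldUnitsRange K F).subgroupOf G, p ∣ orderOf x ∧ x ≠ 1) →
      ∃ ζ : K, IsPrimitiveRoot ζ p)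

include hKG h4 hp in
/-- The key arithmetic contradiction: if `u ∈ G` has class of order `p^(e+1)` modulo `k*`
and `c^p = (-1)^(p^e) * (-a)` where `a` is the `k`-element corresponding to `u^(p^(e+1))`,
then we get a contradiction from the roots-of-unity hypotheses. -/
lemma killer {p : ℕ} (hprime : p.Prime) {u : Fˣ} (hu : u ∈ G) {e : ℕ}
    (horder : orderOf (mkQ K hu) = p ^ (e + 1)) {a c : K}
    (ha : algebraMap K F a = (u : F) ^ p ^ (e + 1))
    (hc : c ^ p = (-1) ^ p ^ e * (-a)) : False := by
  have hane : a ≠ 0 := by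
    intro h0
    exact pow_ne_zero (p ^ (e + 1)) u.ne_zero (by rw [← ha, h0, map_zero])
  have hcne : c ≠ 0 := by
    intro h0
    apply hane
    have : (0 : K) = (-1) ^ p ^ e * (-a) := by rw [← hc, h0, zero_pow hprime.ne_zero]
    have h2 := this.symm
    rcases mul_eq_zero.mp h2 with h | h
    · exact absurd h (pow_ne_zero _ (neg_ne_zero.mpr one_ne_zero))
    · simpa using h
  -- the unit corresponding to c
  set cu : Fˣ := Units.mk0 (algebraMap K F c) (by
    simpa using (map_ne_zero_iff _ (algebraMap K F).injective).mpr hcne) with hcu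
  have hcuA : cu ∈ fieldUnitsRange K F := mem_A_of_map (k := c) rfl
  have hcuF : (cu : F) = algebraMap K F c := rfl
  -- v = u ^ (p ^ e) has class of order exactly p
  have hvG : u ^ p ^ e ∈ G := pow_mem hu (p ^ e)
  have hvorder : orderOf (mkQ K hvG) = p := by
    have h1 := orderOf_mkQ_pow hu hprime horder (Nat.le_succ e)
    rwa [Nat.succ_sub (le_refl e), Nat.sub_self, pow_one] at h1
  have hvnotA : u ^ p ^ e ∉ fieldUnitsRange K F :=
    not_mem_A_of_orderOf_ne_one hvG (by rw [hvorder]; exact hprime.ne_one)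
  have hvFpow : ((u ^ p ^ e : Fˣ) : F) ^ p = algebraMap K F a := by
    rw [← Units.val_pow_eq_pow_val, ← pow_mul, ← pow_succ]
    rw [ha, Units.val_pow_eq_pow_val]
  rcases hprime.eq_two_or_odd' with h2 | hodd
  · -- p = 2
    subst h2
    rcases Nat.eq_zero_or_pos e with he0 | hepos
    · -- e = 0 : c ^ 2 = a, so u / cu is ±1 and u ∈ k*, contradiction
      subst he0
      have hca : c ^ 2 = a := by
        rw [hc, pow_zero, pow_one]; ring
      -- ζ := u ^ (2^0) * cu⁻¹ squares to 1
      set ζ : Fˣ := u ^ (2:ℕ) ^ (0:ℕ) * cu⁻¹ with hζ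
      have hζsq : ((ζ : F)) * ((ζ : F)) = 1 := by
        have : ((ζ : F)) * ((ζ : F)) = (((u ^ (2:ℕ) ^ (0:ℕ) : Fˣ) : F)) ^ 2 * ((cu : F))⁻¹ ^ 2 := by
          rw [hζ]; push_cast [Units.val_mul, Units.val_inv_eq_inv_val]; ring
        rw [this, hvFpow, hcuF, inv_pow, ← map_pow, hca, ← map_inv₀, ← map_mul,
          mul_inv_cancel₀ hane, map_one]
      have hζA : ζ ∈ fieldUnitsRange K F := by
        rcases mul_self_eq_one_iff.mp hζsq with h | h
        · exact mem_A_of_map (k := 1) (by rw [map_one, h])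
        · exact mem_A_of_map (k := -1) (by rw [map_neg, map_one, h])
      apply hvnotA
      have : u ^ (2:ℕ) ^ (0:ℕ) = ζ * cu := by rw [hζ, inv_mul_cancel_right]
      rw [this]
      exact mul_mem hζA hcuA
    · -- e ≥ 1 : c ^ 2 = -a, so (u^(2^e) / cu) ^ 2 = -1, giving a 4th root of unity in G
      obtain ⟨e', rfl⟩ : ∃ e', e = e' + 1 := ⟨e - 1, by omega⟩
      have hca : c ^ 2 = -a := by
        rw [hc, Even.neg_one_pow ⟨2 ^ e', by rw [pow_succ]; ring⟩, one_mul]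
      set i : Fˣ := u ^ (2:ℕ) ^ (e' + 1) * cu⁻¹ with hi
      have hisq : ((i : F)) ^ 2 = -1 := by
        have : ((i : F)) ^ 2 = (((u ^ (2:ℕ) ^ (e' + 1) : Fˣ) : F)) ^ 2 * ((cu : F))⁻¹ ^ 2 := by
          rw [hi]; push_cast [Units.val_mul, Units.val_inv_eq_inv_val]; ring
        rw [this, hvFpow, hcuF, inv_pow, ← map_pow, hca, ← map_inv₀, ← map_mul,
          show a * (-a)⁻¹ = -1 by field_simp, map_neg, map_one]
      -- the quotient has an element of order 4
      have h4ord : orderOf (mkQ K (pow_mem hu ((2:ℕ) ^ e'))) = 4 := by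
        have h1 := orderOf_mkQ_pow hu hprime horder (by omega : e' ≤ e' + 1 + 1)
        rwa [show e' + 1 + 1 - e' = 2 by omega] at h1
      obtain ⟨ι, hι⟩ := h4 ⟨mkQ K (pow_mem hu ((2:ℕ) ^ e')), h4ord⟩
      have hιF : IsPrimitiveRoot (algebraMap K F ι) 4 :=
        hι.map_of_injective (algebraMap K F).injective
      have hi4 : ((i : F)) ^ 4 = 1 := by
        rw [show (4:ℕ) = 2 * 2 from rfl, pow_mul, hisq]
        ring
      haveI : NeZero (4 : ℕ) := ⟨by norm_num⟩
      obtain ⟨j, _, hjeq⟩ := hιF.eq_pow_of_pow_eq_one hi4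
      have hiA : i ∈ fieldUnitsRange K F := mem_A_of_map (k := ι ^ j) (by rw [map_pow, hjeq])
      apply hvnotA
      have : u ^ (2:ℕ) ^ (e' + 1) = i * cu := by rw [hi, inv_mul_cancel_right]
      rw [this]
      exact mul_mem hiA hcuA
  · -- p odd : c ^ p = a, so u^(p^e)/cu is a primitive p-th root of unity lying in G
    have hca : c ^ p = a := by
      rw [hc, Odd.neg_one_pow (hodd.pow)]; ring
    set ζ : Fˣ := u ^ p ^ e * cu⁻¹ with hζ
    have hζG : ζ ∈ G := mul_mem hvG (inv_mem (hKG hcuA))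
    have hζp : ((ζ : F)) ^ p = 1 := by
      have : ((ζ : F)) ^ p = (((u ^ p ^ e : Fˣ) : F)) ^ p * ((cu : F))⁻¹ ^ p := by
        rw [hζ]; push_cast [Units.val_mul, Units.val_inv_eq_inv_val]; ring
      rw [this]
      have hvF2 : ((u ^ p ^ e : Fˣ) : F) ^ p = algebraMap K F a := hvFpow
      rw [hvF2, hcuF, inv_pow, ← map_pow, hca, ← map_inv₀, ← map_mul,
        mul_inv_cancel₀ hane, map_one]
    have hζunit : ζ ^ p = 1 := Units.ext (by
      rw [Units.val_pow_eq_pow_val, hζp, Units.val_one])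
    have hζ1 : ζ ≠ 1 := by
      intro h1
      apply hvnotA
      have : u ^ p ^ e = cu := by
        have := congrArg (· * cu) h1
        simpa [hζ, mul_assoc] using this
      rw [this]; exact hcuA
    haveI : Fact p.Prime := ⟨hprime⟩
    have hordζ : orderOf ζ = p := orderOf_eq_prime hζunit hζ1
    have htrig1 : ∃ g : G, IsOfFinOrder g ∧ p ∣ orderOf g := by
      refine ⟨⟨ζ, hζG⟩, ?_, ?_⟩
      · rw [← orderOf_pos_iff, Subgroup.orderOf_mk, hordζ]
        exact hprime.pos
      · rw [Subgroup.orderOf_mk, hordζ]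
    have htrig2 : ∃ x : G ⧸ (fieldUnitsRange K F).subgroupOf G, p ∣ orderOf x ∧ x ≠ 1 := by
      refine ⟨mkQ K hvG, by rw [hvorder], ?_⟩
      intro h1
      rw [h1, orderOf_one] at hvorder
      exact hprime.ne_one hvorder.symm
    obtain ⟨ω, hω⟩ := hp p hprime htrig1 htrig2
    have hωF : IsPrimitiveRoot (algebraMap K F ω) p :=
      hω.map_of_injective (algebraMap K F).injective
    haveI : NeZero p := ⟨hprime.ne_zero⟩
    obtain ⟨j, _, hjeq⟩ := hωF.eq_pow_of_pow_eq_one hζp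
    have hζA : ζ ∈ fieldUnitsRange K F := mem_A_of_map (k := ω ^ j) (by rw [map_pow, hjeq])
    apply hvnotA
    have : u ^ p ^ e = ζ * cu := by rw [hζ, inv_mul_cancel_right]
    rw [this]
    exact mul_mem hζA hcuA

include hKG h4 hp in
/-- Main induction: the minimal polynomial of `u` over `k` is `X ^ (p ^ e) - a`. -/
theorem minpoly_eq_binomial {p : ℕ} (hprime : p.Prime) (e : ℕ) :
    ∀ (u : Fˣ) (hu : u ∈ G), orderOf (mkQ K hu) = p ^ e →
      ∀ a : K, algebraMap K F a = (u : F) ^ p ^ e →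
      minpoly K (u : F) = X ^ p ^ e - C a := by
  induction e with
  | zero =>
    intro u hu _ a ha
    rw [pow_zero, pow_one] at ha ⊢
    rw [← ha, minpoly.eq_X_sub_C F a]
  | succ e IH =>
    intro u hu horder a ha
    have hpne : p ≠ 0 := hprime.ne_zero
    -- the element w = u ^ p
    have hwG : u ^ p ∈ G := pow_mem hu p
    set wF : F := ((u ^ p : Fˣ) : F) with hwFdef
    have hwFval : wF = (u : F) ^ p := by rw [hwFdef, Units.val_pow_eq_pow_val]
    have hworder : orderOf (mkQ K hwG) = p ^ e := by
      have hmkw : mkQ K hwG = (mkQ K hu) ^ p := mkQ_pow hu p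
      rw [hmkw, orderOf_pow' _ hprime.ne_zero, horder,
        Nat.gcd_eq_right (dvd_pow_self p e.succ_ne_zero), pow_succ,
        Nat.mul_div_cancel _ hprime.pos]
    have haw : algebraMap K F a = wF ^ p ^ e := by
      rw [hwFval, ← pow_mul, ← pow_succ']
      exact ha
    have hminw : minpoly K wF = X ^ p ^ e - C a := IH (u ^ p) hwG hworder a haw
    have hwint : IsIntegral K wF := by
      refine IsIntegral.of_pow (pow_pos hprime.pos e) ?_
      rw [← haw]
      exact isIntegral_algebraMap
    have hane : a ≠ 0 := by
      intro h0
      exact pow_ne_zero (p ^ (e + 1)) u.ne_zero (by rw [← ha, h0, map_zero])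
    -- the intermediate field E = K(w)
    haveI hfdE : FiniteDimensional K K⟮wF⟯ := adjoin.finiteDimensional hwint
    have hdimE : Module.finrank K K⟮wF⟯ = p ^ e := by
      rw [adjoin.finrank hwint, hminw, natDegree_X_pow_sub_C]
    have hnormw : Algebra.norm K (AdjoinSimple.gen K wF) = (-1) ^ p ^ e * (-a) := by
      have h1 := Algebra.PowerBasis.norm_gen_eq_coeff_zero_minpoly (adjoin.powerBasis hwint)
      rw [adjoin.powerBasis_gen, adjoin.powerBasis_dim, minpoly_gen, hminw,
        natDegree_X_pow_sub_C] at h1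
      rw [h1]
      congr 1
      rw [coeff_sub, coeff_X_pow, if_neg (pow_pos hprime.pos e).ne, coeff_C_zero, zero_sub]
    -- irreducibility of X ^ p - w over K(w)
    have hirr : Irreducible ((X : (K⟮wF⟯)[X]) ^ p - C (AdjoinSimple.gen K wF)) := by
      apply X_pow_sub_C_irreducible_of_prime hprime
      intro b hb
      have hnb : (Algebra.norm K b) ^ p = (-1) ^ p ^ e * (-a) := by
        rw [← map_pow, hb, hnormw]
      exact killer hKG h4 hp hprime hu horder ha hnb
    have huint : IsIntegral K (u : F) := by
      refine IsIntegral.of_pow (pow_pos hprime.pos (e + 1)) ?_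
      rw [← ha]
      exact isIntegral_algebraMap
    have huintE : IsIntegral K⟮wF⟯ (u : F) := huint.tower_top
    have hminE : minpoly K⟮wF⟯ (u : F) = X ^ p - C (AdjoinSimple.gen K wF) := by
      refine (minpoly.eq_of_irreducible_of_monic hirr ?_ (monic_X_pow_sub_C _ hpne)).symm
      rw [map_sub, map_pow, aeval_X, aeval_C, AdjoinSimple.algebraMap_gen, hwFval, sub_self]
    have hdimT : Module.finrank K⟮wF⟯ (IntermediateField.adjoin K⟮wF⟯ {(u : F)}) = p := by
      rw [adjoin.finrank huintE, hminE, natDegree_X_pow_sub_C]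
    -- the tower K ⊆ K(w) ⊆ K(w)(u) = K(u)
    have hres : IntermediateField.restrictScalars K
        (IntermediateField.adjoin K⟮wF⟯ {(u : F)}) = K⟮(u : F)⟯ := by
      rw [adjoin_adjoin_left]
      apply le_antisymm
      · rw [adjoin_le_iff]
        intro x hx
        rcases hx with hx | hx
        · rw [Set.mem_singleton_iff] at hx
          subst hx
          rw [hwFval]
          exact pow_mem (mem_adjoin_simple_self K (u : F)) p
        · rw [Set.mem_singleton_iff] at hx
          subst hx
          exact mem_adjoin_simple_self K (u : F)
      · exact IntermediateField.adjoin.mono _ _ _ Set.subset_union_right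
    have hdimU : Module.finrank K K⟮(u : F)⟯ = p ^ (e + 1) := by
      have hmul := Module.finrank_mul_finrank K K⟮wF⟯
        (IntermediateField.adjoin K⟮wF⟯ {(u : F)})
      rw [hdimE, hdimT] at hmul
      have hfr : Module.finrank K (IntermediateField.restrictScalars K
          (IntermediateField.adjoin K⟮wF⟯ {(u : F)}))
          = Module.finrank K (IntermediateField.adjoin K⟮wF⟯ {(u : F)}) :=
        LinearEquiv.finrank_eq
          { toFun := fun x => ⟨x.1, x.2⟩, invFun := fun x => ⟨x.1, x.2⟩,
            map_add' := fun _ _ => rfl, map_smul' := fun _ _ => rfl,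
            left_inv := fun _ => rfl, right_inv := fun _ => rfl }
      have hfin : Module.finrank K K⟮(u : F)⟯ = p ^ e * p := by
        rw [← hres, hfr, hmul]
      rw [hfin, pow_succ]
    have hdvd : minpoly K (u : F) ∣ X ^ p ^ (e + 1) - C a :=
      minpoly.dvd K _ (by rw [map_sub, map_pow, aeval_X, aeval_C, ← ha, sub_self])
    have hmon : (X ^ p ^ (e + 1) - C a).Monic :=
      monic_X_pow_sub_C a (pow_pos hprime.pos (e + 1)).ne'
    refine (eq_of_monic_of_dvd_of_natDegree_le (minpoly.monic huint) hmon hdvd ?_).symm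
    rw [natDegree_X_pow_sub_C, ← hdimU, adjoin.finrank huint]

end Killer

end KneserAux

open KneserAux

/-- Lemma 1.2. -/
theorem degree_adjoin_of_primePow_index
    (K F : Type*) [Field K] [Field F] [Algebra K F] (G : Subgroup Fˣ)
    (hKG : fieldUnitsRange K F ≤ G)
    -- the quotient group G/k* is torsion
    (htors : ∀ x : G ⧸ (fieldUnitsRange K F).subgroupOf G, IsOfFinOrder x)
    -- k contains a primitive 4th root of unity whenever G/k* has an element of order 4
    (h4 : (∃ x : G ⧸ (fieldUnitsRange K F).subgroupOf G, orderOf x = 4) →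
      ∃ ζ : K, IsPrimitiveRoot ζ 4)
    -- for every prime p in π(t(G)) ∩ π(G/k*), k contains a primitive p-th root of unity
    (hp : ∀ p : ℕ, p.Prime → (∃ g : G, IsOfFinOrder g ∧ p ∣ orderOf g) →
      (∃ x : G ⧸ (fieldUnitsRange K F).subgroupOf G, p ∣ orderOf x ∧ x ≠ 1) →
      ∃ ζ : K, IsPrimitiveRoot ζ p)
    -- the characteristic of k does not belong to π(G/k*)
    (hchar : ∀ p : ℕ, p.Prime →
      (∃ x : G ⧸ (fieldUnitsRange K F).subgroupOf G, p ∣ orderOf x ∧ x ≠ 1) →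
      ringChar K ≠ p)
    -- |G/k*| = p^m for a prime p and a nonnegative integer m
    (p m : ℕ) (hprime : p.Prime)
    (hcard : Nat.card (G ⧸ (fieldUnitsRange K F).subgroupOf G) = p ^ m) :
    Module.finrank K (IntermediateField.adjoin K ((fun u : Fˣ => (u : F)) '' (G : Set Fˣ)))
      = p ^ m := by
  classical
  haveI hQfin : Finite (G ⧸ (fieldUnitsRange K F).subgroupOf G) :=
    Nat.finite_of_card_ne_zero (by rw [hcard]; exact (pow_pos hprime.pos m).ne')
  letI : Fintype (G ⧸ (fieldUnitsRange K F).subgroupOf G) := Fintype.ofFinite _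
  set V := IntermediateField.adjoin K ((fun u : Fˣ => (u : F)) '' (G : Set Fˣ)) with hVdef
  -- the binomial minimal polynomial package for each element of G
  have hmp : ∀ (u : Fˣ) (hu : u ∈ G), ∃ (ee : ℕ) (aa : K),
      orderOf (mkQ K hu) = p ^ ee ∧ algebraMap K F aa = (u : F) ^ p ^ ee ∧
      minpoly K (u : F) = X ^ p ^ ee - C aa := by
    intro u hu
    have hdvd : orderOf (mkQ K hu) ∣ p ^ m := by
      rw [← hcard]; exact orderOf_dvd_natCard _
    obtain ⟨ee, _, hord⟩ := (Nat.dvd_prime_pow hprime).mp hdvd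
    have hpow1 : (mkQ K hu) ^ p ^ ee = 1 := by
      rw [← hord]; exact pow_orderOf_eq_one _
    have hmemA : u ^ p ^ ee ∈ fieldUnitsRange K F := by
      rw [← mkQ_eq_one_iff (pow_mem hu (p ^ ee)), mkQ_pow]
      exact hpow1
    obtain ⟨aa, haa⟩ := exists_map_of_mem_A hmemA
    have haa' : algebraMap K F aa = (u : F) ^ p ^ ee := by
      rw [haa, Units.val_pow_eq_pow_val]
    exact ⟨ee, aa, hord, haa', minpoly_eq_binomial hKG h4 hp hprime ee u hu hord aa haa'⟩
  have hint : ∀ (u : Fˣ), u ∈ G → IsIntegral K (u : F) := by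
    intro u hu
    obtain ⟨ee, aa, _, haa, _⟩ := hmp u hu
    refine IsIntegral.of_pow (pow_pos hprime.pos ee) ?_
    rw [← haa]
    exact isIntegral_algebraMap
  -- separability of each element of G
  have hsep : ∀ (u : Fˣ), u ∈ G → IsSeparable K (u : F) := by
    intro u hu
    obtain ⟨ee, aa, hord, haa, hmin⟩ := hmp u hu
    show (minpoly K ((u : Fˣ) : F)).Separable
    rw [hmin]
    rcases Nat.eq_zero_or_pos ee with h0 | hpos
    · subst h0
      rw [pow_zero, pow_one]
      exact separable_X_sub_C
    · have haane : aa ≠ 0 := by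
        intro h0
        exact pow_ne_zero (p ^ ee) u.ne_zero (by rw [← haa, h0, map_zero])
      have hchK : ringChar K ≠ p := by
        apply hchar p hprime
        have h1 : orderOf (mkQ K (pow_mem hu (p ^ (ee - 1)))) = p := by
          have := orderOf_mkQ_pow hu hprime hord (Nat.sub_le ee 1)
          rwa [show ee - (ee - 1) = 1 by omega, pow_one] at this
        refine ⟨mkQ K (pow_mem hu (p ^ (ee - 1))), by rw [h1], ?_⟩
        intro h1'
        rw [h1', orderOf_one] at h1
        exact hprime.ne_one h1.symm
      have hcast : ((p ^ ee : ℕ) : K) ≠ 0 := by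
        intro h0
        have hdvd2 : ringChar K ∣ p ^ ee := (CharP.cast_eq_zero_iff K (ringChar K) _).mp h0
        rcases CharP.char_is_prime_or_zero K (ringChar K) with hpr | hzero
        · exact hchK ((Nat.prime_dvd_prime_iff_eq hpr hprime).mp (hpr.dvd_of_dvd_pow hdvd2))
        · rw [hzero] at hdvd2
          exact (pow_pos hprime.pos ee).ne' (Nat.eq_zero_of_zero_dvd hdvd2)
      exact separable_X_pow_sub_C aa hcast haane
  -- representatives for the classes
  set r : (G ⧸ (fieldUnitsRange K F).subgroupOf G) → Fˣ :=
    fun q => ((Quotient.out q : G) : Fˣ) with hrdef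
  have hrG : ∀ q, r q ∈ G := fun q => (Quotient.out q).2
  have hrmk : ∀ q, mkQ K (hrG q) = q := by
    intro q
    have h1 : (⟨r q, hrG q⟩ : G) = Quotient.out q := Subtype.ext rfl
    rw [mkQ, h1]
    exact QuotientGroup.out_eq' q
  -- coset decomposition of each element of G
  have hdecomp : ∀ (u : Fˣ) (hu : u ∈ G), ∃ k : K,
      (u : F) = algebraMap K F k * ((r (mkQ K hu) : Fˣ) : F) := by
    intro u hu
    have h1 : mkQ K (mul_mem hu (inv_mem (hrG (mkQ K hu)))) = 1 := by
      rw [mkQ_mul hu (inv_mem (hrG (mkQ K hu))), mkQ_inv (hrG (mkQ K hu)), hrmk, mul_inv_cancel]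
    have h2 : u * (r (mkQ K hu))⁻¹ ∈ fieldUnitsRange K F := (mkQ_eq_one_iff _).mp h1
    obtain ⟨k, hk⟩ := exists_map_of_mem_A h2
    refine ⟨k, ?_⟩
    have hk' : algebraMap K F k = (u : F) * ((r (mkQ K hu) : Fˣ) : F)⁻¹ := by
      rw [hk]
      push_cast [Units.val_mul, Units.val_inv_eq_inv_val]
      ring
    rw [hk']
    field_simp
  -- the span of the representatives
  set sF : Set F := Set.range (fun q => ((r q : Fˣ) : F)) with hsFdef
  set W : Submodule K F := Submodule.span K sF with hWdef
  have hgenW : ∀ q, ((r q : Fˣ) : F) ∈ W := fun q => Submodule.subset_span ⟨q, rfl⟩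
  have hGW : ∀ (u : Fˣ), u ∈ G → (u : F) ∈ W := by
    intro u hu
    obtain ⟨k, hk⟩ := hdecomp u hu
    rw [hk, ← Algebra.smul_def]
    exact Submodule.smul_mem _ _ (hgenW _)
  have honeW : (1 : F) ∈ W := by
    have h1 : (1 : Fˣ) ∈ G := one_mem G
    have := hGW 1 h1
    simpa using this
  have hWW : ∀ x y : F, x ∈ W → y ∈ W → x * y ∈ W := by
    have hmul : W * W ≤ W := by
      rw [hWdef, Submodule.span_mul_span]
      refine Submodule.span_le.mpr ?_
      intro z hz
      rw [Set.mem_mul] at hz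
      obtain ⟨x, ⟨q, rfl⟩, y, ⟨q', rfl⟩, rfl⟩ := hz
      have : ((r q : Fˣ) : F) * ((r q' : Fˣ) : F) = (((r q * r q' : Fˣ)) : F) := by
        rw [Units.val_mul]
      rw [this]
      exact hGW _ (mul_mem (hrG q) (hrG q'))
    intro x y hx hy
    exact hmul (Submodule.mul_mem_mul hx hy)
  -- W as a subalgebra, hence an intermediate field
  set Salg : Subalgebra K F := W.toSubalgebra honeW hWW with hSalgdef
  haveI hWfd : FiniteDimensional K W := FiniteDimensional.span_of_finite K (Set.finite_range _)
  haveI hSalgfd : Module.Finite K Salg := hWfd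
  have hinvmem : ∀ x ∈ Salg, x⁻¹ ∈ Salg := by
    intro x hx
    have halg : IsAlgebraic K ((⟨x, hx⟩ : Salg) : F) := by
      have hint' : IsIntegral K (⟨x, hx⟩ : Salg) :=
        (Algebra.IsIntegral.of_finite K Salg).isIntegral _
      exact (hint'.map (Salg.val)).isAlgebraic
    exact Subalgebra.inv_mem_of_algebraic Salg halg
  set Eint : IntermediateField K F := Salg.toIntermediateField hinvmem with hEintdef
  have hVleE : V ≤ Eint := by
    rw [hVdef, adjoin_le_iff]
    rintro _ ⟨u, hu, rfl⟩
    exact hGW u hu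
  have hWleV : ∀ x, x ∈ W → x ∈ V := by
    intro x hx
    have hle : W ≤ Subalgebra.toSubmodule V.toSubalgebra := by
      rw [hWdef, Submodule.span_le]
      rintro _ ⟨q, rfl⟩
      exact IntermediateField.subset_adjoin K _ ⟨r q, hrG q, rfl⟩
    exact hle hx
  -- finite dimensionality of V
  have hVeq : V = IntermediateField.adjoin K sF := by
    apply le_antisymm
    · rw [hVdef, adjoin_le_iff]
      rintro _ ⟨u, hu, rfl⟩
      obtain ⟨k, hk⟩ := hdecomp u hu
      show ((u : Fˣ) : F) ∈ IntermediateField.adjoin K sF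
      rw [hk]
      exact mul_mem (IntermediateField.algebraMap_mem _ k)
        (IntermediateField.subset_adjoin K _ ⟨mkQ K hu, rfl⟩)
    · rw [adjoin_le_iff]
      rintro _ ⟨q, rfl⟩
      exact IntermediateField.subset_adjoin K _ ⟨r q, hrG q, rfl⟩
  haveI hVfd : FiniteDimensional K V := by
    rw [hVeq]
    haveI : Finite sF := Set.finite_range _
    exact IntermediateField.finiteDimensional_adjoin
      (fun x hx => by obtain ⟨q, rfl⟩ := hx; exact hint _ (hrG q))
  -- separability of V
  have hVsepcl : V ≤ separableClosure K F := by
    rw [hVdef, adjoin_le_iff]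
    rintro _ ⟨u, hu, rfl⟩
    exact mem_separableClosure_iff.mpr (hsep u hu)
  haveI hVsep : Algebra.IsSeparable K V := by
    refine ⟨fun x => ?_⟩
    have hx : IsSeparable K (x : F) := mem_separableClosure_iff.mp (hVsepcl x.2)
    have heq : minpoly K (x : F) = minpoly K x :=
      minpoly.algebraMap_eq (algebraMap V F).injective x
    have hx' : (minpoly K (x : F)).Separable := hx
    rw [heq] at hx'
    exact hx'
  -- vanishing of traces of elements of G ∖ k*
  have hVmem : ∀ (u : Fˣ), u ∈ G → (u : F) ∈ V :=
    fun u hu => IntermediateField.subset_adjoin K _ ⟨u, hu, rfl⟩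
  have htr0 : ∀ (u : Fˣ) (hu : u ∈ G), u ∉ fieldUnitsRange K F →
      Algebra.trace K V ⟨(u : F), hVmem u hu⟩ = 0 := by
    intro u hu hnA
    obtain ⟨ee, aa, hord, haa, hmin⟩ := hmp u hu
    have heepos : 0 < ee := by
      rcases Nat.eq_zero_or_pos ee with h0 | h
      · exfalso
        apply hnA
        rw [h0, pow_zero] at hord
        exact (mkQ_eq_one_iff hu).mp (orderOf_eq_one_iff.mp hord)
      · exact h
    set x : V := ⟨(u : F), hVmem u hu⟩ with hxdef
    have hxint : IsIntegral K x := (Algebra.IsIntegral.of_finite K V).isIntegral x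
    have hxcoe : algebraMap V F x = (u : F) := rfl
    have hminx : minpoly K x = X ^ p ^ ee - C aa := by
      rw [← minpoly.algebraMap_eq (algebraMap V F).injective x, hxcoe, hmin]
    haveI hfdEx : FiniteDimensional K ↥(IntermediateField.adjoin K ({x} : Set ↥V)) :=
      adjoin.finiteDimensional hxint
    haveI hfdExV : FiniteDimensional ↥(IntermediateField.adjoin K ({x} : Set ↥V)) ↥V :=
      FiniteDimensional.right K _ ↥V
    have h3 := (adjoin.powerBasis hxint).trace_gen_eq_nextCoeff_minpoly
    rw [adjoin.powerBasis_gen, minpoly_gen, hminx] at h3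
    have h2 : Algebra.trace K ↥(IntermediateField.adjoin K ({x} : Set ↥V))
        (AdjoinSimple.gen K x) = 0 := by
      rw [h3]
      have hnd : (X ^ p ^ ee - C aa).natDegree = p ^ ee := natDegree_X_pow_sub_C
      have hndpos : 0 < (X ^ p ^ ee - C aa).natDegree := by
        rw [hnd]; exact pow_pos hprime.pos ee
      rw [nextCoeff_of_natDegree_pos hndpos, hnd, coeff_sub, coeff_X_pow]
      have hne1 : p ^ ee - 1 ≠ p ^ ee := by
        have : 1 ≤ p ^ ee := Nat.one_le_iff_ne_zero.mpr (pow_pos hprime.pos ee).ne'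
        omega
      have hne2 : p ^ ee - 1 ≠ 0 := by
        have h2le : 2 ≤ p ^ ee := by
          calc 2 ≤ p := hprime.two_le
          _ = p ^ 1 := (pow_one p).symm
          _ ≤ p ^ ee := Nat.pow_le_pow_right hprime.pos heepos
        omega
      rw [if_neg hne1, coeff_C, if_neg hne2, sub_zero, neg_zero]
    have hx' : algebraMap ↥(IntermediateField.adjoin K ({x} : Set ↥V)) ↥V
        (AdjoinSimple.gen K x) = x := AdjoinSimple.algebraMap_gen K x
    have h4' : Algebra.trace ↥(IntermediateField.adjoin K ({x} : Set ↥V)) ↥V x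
        = (Module.finrank ↥(IntermediateField.adjoin K ({x} : Set ↥V)) ↥V)
          • AdjoinSimple.gen K x := by
      have h5 := Algebra.trace_algebraMap
        (R := ↥(IntermediateField.adjoin K ({x} : Set ↥V))) (S := ↥V)
        (AdjoinSimple.gen K x)
      rw [hx'] at h5
      exact h5
    calc Algebra.trace K ↥V x
        = Algebra.trace K ↥(IntermediateField.adjoin K ({x} : Set ↥V))
            (Algebra.trace ↥(IntermediateField.adjoin K ({x} : Set ↥V)) ↥V x) :=
          (Algebra.trace_trace x).symm
      _ = Algebra.trace K ↥(IntermediateField.adjoin K ({x} : Set ↥V))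
            ((Module.finrank ↥(IntermediateField.adjoin K ({x} : Set ↥V)) ↥V)
              • AdjoinSimple.gen K x) := by rw [h4']
      _ = (Module.finrank ↥(IntermediateField.adjoin K ({x} : Set ↥V)) ↥V)
            • Algebra.trace K ↥(IntermediateField.adjoin K ({x} : Set ↥V))
              (AdjoinSimple.gen K x) := map_nsmul _ _ _
      _ = 0 := by rw [h2, smul_zero]
  -- the vectors
  set v : (G ⧸ (fieldUnitsRange K F).subgroupOf G) → V :=
    fun q => ⟨((r q : Fˣ) : F), hVmem _ (hrG q)⟩ with hvdef
  have hvne : ∀ q, v q ≠ 0 := by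
    intro q h0
    exact (r q).ne_zero (congrArg Subtype.val h0)
  -- spanning
  have hspan : ⊤ ≤ Submodule.span K (Set.range v) := by
    intro z _
    have hzW : (z : F) ∈ W := by
      have : (z : F) ∈ Eint := hVleE z.2
      exact this
    have himg : sF = (V.val.toLinearMap) '' (Set.range v) := by
      ext y
      constructor
      · rintro ⟨q, rfl⟩
        exact ⟨v q, ⟨q, rfl⟩, rfl⟩
      · rintro ⟨_, ⟨q, rfl⟩, rfl⟩
        exact ⟨q, rfl⟩
    rw [hWdef, himg, Submodule.span_image] at hzW
    obtain ⟨z', hz', hzz⟩ := hzW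
    have : z' = z := Subtype.ext hzz
    rwa [← this]
  -- traces of products of representatives
  set τ : K := Algebra.trace K V 1 with hτdef
  have hvprod : ∀ q q' : (G ⧸ (fieldUnitsRange K F).subgroupOf G), q ≠ q' →
      Algebra.trace K V (v q * (v q')⁻¹) = 0 := by
    intro q q' hne
    have hmemG : (r q) * (r q')⁻¹ ∈ G := mul_mem (hrG q) (inv_mem (hrG q'))
    have hval : (v q * (v q')⁻¹ : V) = ⟨(((r q) * (r q')⁻¹ : Fˣ) : F), hVmem _ hmemG⟩ := by
      apply Subtype.ext
      simp only [hvdef, MulMemClass.coe_mul, IntermediateField.coe_inv, Units.val_mul,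
        Units.val_inv_eq_inv_val]
    rw [hval]
    apply htr0 _ hmemG
    intro hA
    apply hne
    have h1 := (mkQ_eq_one_iff hmemG).mpr hA
    rw [mkQ_mul (hrG q) (inv_mem (hrG q')), mkQ_inv (hrG q'), hrmk, hrmk] at h1
    exact mul_inv_eq_one.mp h1
  have hτval : τ = (Module.finrank K V : K) := by
    have h1 : (1 : V) = algebraMap K V 1 := (map_one _).symm
    rw [hτdef, h1, Algebra.trace_algebraMap, nsmul_eq_mul, mul_one]
  -- nonvanishing of the trace of 1
  have hτ : τ ≠ 0 := by
    intro h0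
    have hall : ∀ z : V, Algebra.trace K V z = 0 := by
      have hker : Submodule.span K (Set.range v) ≤ LinearMap.ker (Algebra.trace K V) := by
        rw [Submodule.span_le]
        rintro _ ⟨q, rfl⟩
        rw [SetLike.mem_coe, LinearMap.mem_ker]
        by_cases hA : (r q) ∈ fieldUnitsRange K F
        · obtain ⟨k, hk⟩ := exists_map_of_mem_A hA
          have hvq : v q = algebraMap K V k := Subtype.ext (by
            rw [hvdef]
            exact hk.symm)
          rw [hvq, Algebra.trace_algebraMap, nsmul_eq_mul]
          have : (Module.finrank K V : K) = 0 := by rw [← hτval]; exact h0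
          rw [this, zero_mul]
        · exact htr0 _ (hrG q) hA
      intro z
      exact LinearMap.mem_ker.mp (hker (hspan trivial))
    have hnd := traceForm_nondegenerate K V
    have h1 := hnd.1 1 (fun y => by
      rw [Algebra.traceForm_apply, one_mul]
      exact hall y)
    exact one_ne_zero h1
  -- linear independence
  have hind : LinearIndependent K v := by
    rw [Fintype.linearIndependent_iff]
    intro g hg q₀
    set ℓ : V →ₗ[K] K := (Algebra.trace K V).comp (LinearMap.mulRight K ((v q₀)⁻¹)) with hℓdef
    have happ := congrArg ℓ hg
    rw [map_sum, map_zero] at happ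
    have hterm : ∀ q, ℓ (g q • v q) = g q • Algebra.trace K V (v q * (v q₀)⁻¹) := by
      intro q
      rw [map_smul]
      rfl
    rw [Finset.sum_congr rfl (fun q _ => hterm q)] at happ
    rw [Finset.sum_eq_single q₀ (fun q _ hq => by
        rw [hvprod q q₀ hq, smul_zero]) (fun h => absurd (Finset.mem_univ q₀) h)] at happ
    rw [mul_inv_cancel₀ (hvne q₀)] at happ
    have : g q₀ * τ = 0 := by rwa [smul_eq_mul] at happ
    rcases mul_eq_zero.mp this with h | h
    · exact h
    · exact absurd h hτ
  -- conclusion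
  have hb : Module.Basis (G ⧸ (fieldUnitsRange K F).subgroupOf G) K V := Module.Basis.mk hind hspan
  rw [Module.finrank_eq_card_basis hb, ← Nat.card_eq_fintype_card, hcard]
end

section
/- Let R be a ring, let G be a group, let M = aRG be a cyclic RG-module generated by a nonzero element a ∈ M, let I = Ann_{RG}(a), let H be a subgroup of G, and let U = aRH. Then the subgroup H controls the right ideal I, i.e., I = (I ∩ RH)RG, if and only if M = ⊕_{t ∈ T} Ut for a right transversal T to H in G (equivalently, if and only if M = U ⊗_{RH} RG). -/
section

variable (R : Type*) [Ring R] (G : Type*) [Group G]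
variable (M : Type*) [AddCommGroup M] [Module (MonoidAlgebra R G)ᵐᵒᵖ M]

/-- The set `Ut = aRH·t`: the image of the right `RH`-orbit of `a`, translated by `t`,
i.e. `{a·x·t | x ∈ RH}`, as an additive subgroup of the right `RG`-module `M`. -/
def orbitTranslate (a : M) (RH : Submodule R (MonoidAlgebra R G)) (t : G) :
    AddSubgroup M where
  carrier := {m | ∃ x ∈ RH, m = MulOpposite.op (x * MonoidAlgebra.of R G t) • a}
  zero_mem' := ⟨0, RH.zero_mem, by simp⟩
  add_mem' := by
    rintro m₁ m₂ ⟨x₁, hx₁, rfl⟩ ⟨x₂, hx₂, rfl⟩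
    refine ⟨x₁ + x₂, RH.add_mem hx₁ hx₂, ?_⟩
    rw [add_mul, MulOpposite.op_add, add_smul]
  neg_mem' := by
    rintro m ⟨x, hx, rfl⟩
    refine ⟨-x, RH.neg_mem hx, ?_⟩
    rw [neg_mul, MulOpposite.op_neg, neg_smul]

end

section ControlAux

open MulOpposite MonoidAlgebra
open scoped Classical

variable {R : Type*} [Ring R] {G : Type*} [Group G]

noncomputable def cproj (H : Subgroup G) (t : G) (r : MonoidAlgebra R G) : MonoidAlgebra R G :=
  MonoidAlgebra.ofCoeff (Finsupp.filter (fun g => g * t⁻¹ ∈ H) r.coeff)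

lemma cproj_apply (H : Subgroup G) (t : G) (r : MonoidAlgebra R G) (g : G) :
    (cproj H t r).coeff g = if g * t⁻¹ ∈ H then r.coeff g else 0 := by
  rw [cproj, MonoidAlgebra.coeff_ofCoeff, Finsupp.filter_apply]

lemma cproj_zero (H : Subgroup G) (t : G) : cproj H t (0 : MonoidAlgebra R G) = 0 := by
  ext g; rw [cproj_apply]; split_ifs <;> rfl

lemma cproj_add (H : Subgroup G) (t : G) (r s : MonoidAlgebra R G) :
    cproj H t (r + s) = cproj H t r + cproj H t s := by
  ext g
  rw [MonoidAlgebra.coeff_add, Finsupp.add_apply, cproj_apply, cproj_apply, cproj_apply,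
    MonoidAlgebra.coeff_add, Finsupp.add_apply]
  split_ifs <;> simp

lemma cproj_sub (H : Subgroup G) (t : G) (r s : MonoidAlgebra R G) :
    cproj H t (r - s) = cproj H t r - cproj H t s := by
  ext g
  rw [MonoidAlgebra.coeff_sub, Finsupp.sub_apply, cproj_apply, cproj_apply, cproj_apply,
    MonoidAlgebra.coeff_sub, Finsupp.sub_apply]
  split_ifs <;> simp

lemma cproj_finsum (H : Subgroup G) (t : G) {ι : Type*} (S : Finset ι)
    (f : ι → MonoidAlgebra R G) :
    cproj H t (∑ i ∈ S, f i) = ∑ i ∈ S, cproj H t (f i) := by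
  classical
  induction S using Finset.induction_on with
  | empty => simp [cproj_zero]
  | insert _ _ hx ih => rw [Finset.sum_insert hx, Finset.sum_insert hx, cproj_add, ih]

lemma cproj_eq_self (H : Subgroup G) (t : G) (r : MonoidAlgebra R G)
    (h : ∀ g ∈ r.coeff.support, g * t⁻¹ ∈ H) : cproj H t r = r := by
  ext g
  rw [cproj_apply]
  split_ifs with hg
  · rfl
  · by_contra h0
    exact hg (h g (Finsupp.mem_support_iff.2 fun hz => h0 hz.symm))

lemma cproj_eq_zero (H : Subgroup G) (t : G) (r : MonoidAlgebra R G)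
    (h : ∀ g ∈ r.coeff.support, g * t⁻¹ ∉ H) : cproj H t r = 0 := by
  ext g
  rw [cproj_apply]
  split_ifs with hg
  · by_contra h0
    exact h g (Finsupp.mem_support_iff.2 h0) hg
  · rfl

lemma cproj_mul_single (H : Subgroup G) (t g' : G) (c : R) (w : MonoidAlgebra R G) :
    cproj H t (w * MonoidAlgebra.single g' c)
      = cproj H (t * g'⁻¹) w * MonoidAlgebra.single g' c := by
  ext g
  rw [cproj_apply, MonoidAlgebra.coeff_mul_single_apply, MonoidAlgebra.coeff_mul_single_apply, cproj_apply]
  have h : g * g'⁻¹ * (t * g'⁻¹)⁻¹ = g * t⁻¹ := by group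
  rw [h]
  split_ifs <;> simp

end ControlAux


/-- for a cyclic right `RG`-module `M = aRG` with `I = Ann_{RG}(a)`,
a subgroup `H ≤ G` and `U = aRH`, the subgroup `H` controls `I` (i.e. `I = (I ∩ RH)RG`)
if and only if `M = ⊕_{t ∈ T} Ut` for a right transversal `T` to `H` in `G`
(equivalently, if and only if `M = U ⊗_{RH} RG`). -/
theorem controls_iff_directSum
    (R : Type*) [Ring R] (G : Type*) [Group G]
    (M : Type*) [AddCommGroup M] [Module (MonoidAlgebra R G)ᵐᵒᵖ M]
    (a : M) (ha : a ≠ 0)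
    -- M = aRG
    (hM : Submodule.span (MonoidAlgebra R G)ᵐᵒᵖ {a} = ⊤)
    (H : Subgroup G)
    -- T is a right transversal to H in G
    (T : Set G) (htrans : ∀ g : G, ∃! t, t ∈ T ∧ g * t⁻¹ ∈ H) :
    -- I = (I ∩ RH)RG  ↔  M = ⊕_{t ∈ T} Ut
    ({r : MonoidAlgebra R G | MulOpposite.op r • a = 0} =
        (Submodule.span (MonoidAlgebra R G)ᵐᵒᵖ
          ({r : MonoidAlgebra R G | MulOpposite.op r • a = 0} ∩
            (Submodule.span R (⇑(MonoidAlgebra.of R G) '' (H : Set G)) :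
              Set (MonoidAlgebra R G))) : Set (MonoidAlgebra R G)))
      ↔
    (iSupIndep (fun t : T => orbitTranslate R G M a
        (Submodule.span R (⇑(MonoidAlgebra.of R G) '' (H : Set G))) (t : G)) ∧
      (⨆ t : T, orbitTranslate R G M a
        (Submodule.span R (⇑(MonoidAlgebra.of R G) '' (H : Set G))) (t : G)) = ⊤) := by
  classical
  open MulOpposite MonoidAlgebra in
  set A := MonoidAlgebra R G with hA
  set RH : Submodule R A :=
    Submodule.span R (⇑(MonoidAlgebra.of R G) '' (H : Set G)) with hRH
  -- membership in RH
  have hRHmem : ∀ x : A, x ∈ RH ↔ ∀ g ∈ x.coeff.support, g ∈ H := by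
    intro x
    have h1 : RH = MonoidAlgebra.supported R R (H : Set G) := by
      rw [hRH, MonoidAlgebra.supported_eq_span_single]
      congr 1
    rw [h1, MonoidAlgebra.mem_supported]
    exact ⟨fun h g hg => h hg, fun h g hg => h g hg⟩
  -- the transversal function
  choose c hc using htrans
  have hcT : ∀ g, c g ∈ T := fun g => (hc g).1.1
  have hcH : ∀ g, g * (c g)⁻¹ ∈ H := fun g => (hc g).1.2
  have hcu : ∀ g t, t ∈ T → g * t⁻¹ ∈ H → t = c g := fun g t ht hgt => (hc g).2 t ⟨ht, hgt⟩
  -- the annihilator as a submodule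
  set Iann : Submodule Aᵐᵒᵖ A :=
    { carrier := {r : A | MulOpposite.op r • a = 0}
      add_mem' := by
        intro x y hx hy
        simp only [Set.mem_setOf_eq] at *
        rw [MulOpposite.op_add, add_smul, hx, hy, add_zero]
      zero_mem' := by simp
      smul_mem' := by
        intro s x hx
        simp only [Set.mem_setOf_eq] at *
        have h1 : s • x = x * s.unop := rfl
        rw [h1, MulOpposite.op_mul, MulOpposite.op_unop, mul_smul, hx, smul_zero] } with hIann
  have hIann_mem : ∀ r : A, r ∈ Iann ↔ MulOpposite.op r • a = 0 := fun r => Iff.rfl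
  -- decomposition of any r along cosets
  have hdecomp : ∀ r : A, (∑ t ∈ r.coeff.support.image c, cproj H t r) = r := by
    intro r
    ext g
    rw [MonoidAlgebra.coeff_sum, Finset.sum_apply']
    by_cases hg : r.coeff g = 0
    · rw [hg, Finset.sum_eq_zero]
      intro t _
      rw [cproj_apply]
      split_ifs <;> simp [hg]
    · rw [Finset.sum_eq_single_of_mem (c g)
        (Finset.mem_image_of_mem c (Finsupp.mem_support_iff.2 hg))]
      · rw [cproj_apply, if_pos (hcH g)]
      · intro t ht hne
        rw [cproj_apply, if_neg]
        intro hgt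
        obtain ⟨g', _, rfl⟩ := Finset.mem_image.1 ht
        exact hne (hcu g _ (hcT g') hgt)
  -- membership lemma for orbitTranslate
  have hUmem' : ∀ (t : G) (m : M), m ∈ orbitTranslate R G M a RH t ↔
      ∃ x ∈ RH, m = MulOpposite.op (x * MonoidAlgebra.of R G t) • a := fun t m => Iff.rfl
  -- elements of the span have all coset components in the annihilator
  have hkey : ∀ w : A, w ∈ Submodule.span Aᵐᵒᵖ
      ({r : A | MulOpposite.op r • a = 0} ∩ (RH : Set A)) →
      ∀ t : G, cproj H t w ∈ Iann := by
    intro w hw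
    induction hw using Submodule.span_induction with
    | mem z hz =>
      intro t
      by_cases htH : t ∈ H
      · rw [cproj_eq_self]
        · exact hz.1
        · intro g hg
          exact H.mul_mem ((hRHmem z).1 hz.2 g hg) (H.inv_mem htH)
      · rw [cproj_eq_zero]
        · exact Iann.zero_mem
        · intro g hg hmem
          have h2 : g⁻¹ * (g * t⁻¹) ∈ H :=
            H.mul_mem (H.inv_mem ((hRHmem z).1 hz.2 g hg)) hmem
          rw [inv_mul_cancel_left] at h2
          exact htH (H.inv_mem_iff.1 h2)
    | zero => intro t; rw [cproj_zero]; exact Iann.zero_mem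
    | add x y hx hy ihx ihy => intro t; rw [cproj_add]; exact Iann.add_mem (ihx t) (ihy t)
    | smul s w hw ihw =>
      intro t
      have h1 : s • w = w * s.unop := rfl
      have h2 : w * s.unop = ∑ g ∈ s.unop.coeff.support, w * MonoidAlgebra.single g (s.unop.coeff g) := by
        conv_lhs => rw [← MonoidAlgebra.sum_coeff_single s.unop]
        rw [Finsupp.sum, Finset.mul_sum]
      rw [h1, h2, cproj_finsum]
      refine Submodule.sum_mem _ fun g hg => ?_
      rw [cproj_mul_single]
      have h3 : cproj H (t * g⁻¹) w * MonoidAlgebra.single g (s.unop.coeff g)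
          = MulOpposite.op (MonoidAlgebra.single g (s.unop.coeff g)) • cproj H (t * g⁻¹) w := rfl
      rw [h3]
      exact Iann.smul_mem _ (ihw (t * g⁻¹))
  -- the coset component lies in RH·t
  have hsupp_single : ∀ (t : G) (r : A),
      cproj H t r * MonoidAlgebra.single t⁻¹ (1 : R) ∈ RH := by
    intro t r
    rw [hRHmem]
    intro g hg
    rw [Finsupp.mem_support_iff, MonoidAlgebra.coeff_mul_single_apply, inv_inv, mul_one] at hg
    rw [cproj_apply] at hg
    by_cases hmem : g * t * t⁻¹ ∈ H
    · rwa [mul_inv_cancel_right] at hmem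
    · rw [if_neg hmem] at hg
      exact absurd rfl hg
  have hfactor : ∀ (t : G) (r : A),
      cproj H t r = cproj H t r * MonoidAlgebra.single t⁻¹ (1 : R)
        * MonoidAlgebra.single t (1 : R) := by
    intro t r
    rw [mul_assoc, MonoidAlgebra.single_mul_single, inv_mul_cancel, one_mul,
      ← MonoidAlgebra.one_def, mul_one]
  have hUmem : ∀ (t : G) (r : A),
      MulOpposite.op (cproj H t r) • a ∈ orbitTranslate R G M a RH t := by
    intro t r
    refine (hUmem' t _).2 ⟨cproj H t r * MonoidAlgebra.single t⁻¹ 1, hsupp_single t r, ?_⟩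
    rw [MonoidAlgebra.of_apply, ← hfactor]
  -- the supremum is always everything
  have htop : (⨆ t : T, orbitTranslate R G M a RH (t : G)) = ⊤ := by
    rw [eq_top_iff]
    intro m _
    have hm : m ∈ Submodule.span Aᵐᵒᵖ {a} := hM ▸ Submodule.mem_top
    obtain ⟨s, hs⟩ := Submodule.mem_span_singleton.1 hm
    have hra : MulOpposite.op s.unop • a = m := by rw [MulOpposite.op_unop]; exact hs
    have h1 : m = ∑ t ∈ s.unop.coeff.support.image c, MulOpposite.op (cproj H t s.unop) • a := by
      rw [← hra]
      conv_lhs => rw [← hdecomp s.unop]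
      rw [Finset.op_sum, Finset.sum_smul]
    rw [h1]
    refine AddSubgroup.sum_mem _ fun t ht => ?_
    obtain ⟨g', _, rfl⟩ := Finset.mem_image.1 ht
    exact le_iSup (fun t : T => orbitTranslate R G M a RH (t : G)) ⟨c g', hcT g'⟩
      (hUmem (c g') s.unop)
  constructor
  · -- control implies direct sum
    intro hI
    have hIr : ∀ r : A, MulOpposite.op r • a = 0 → ∀ t, cproj H t r ∈ Iann := by
      intro r hr t
      refine hkey r ?_ t
      have h0 : r ∈ {r : A | MulOpposite.op r • a = 0} := hr
      rw [hI] at h0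
      exact h0
    refine ⟨?_, htop⟩
    rw [iSupIndep_def]
    intro t
    set Vt : AddSubgroup M :=
      { carrier := {m | ∃ r : A, (∀ g ∈ r.coeff.support, g * (t : G)⁻¹ ∉ H) ∧
          m = MulOpposite.op r • a}
        zero_mem' := ⟨0, by simp, by simp⟩
        add_mem' := by
          rintro m₁ m₂ ⟨r₁, h₁, rfl⟩ ⟨r₂, h₂, rfl⟩
          refine ⟨r₁ + r₂, fun g hg => ?_, by rw [MulOpposite.op_add, add_smul]⟩
          rw [MonoidAlgebra.coeff_add] at hg
          rcases Finset.mem_union.1 (Finsupp.support_add hg) with h | h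
          · exact h₁ g h
          · exact h₂ g h
        neg_mem' := by
          rintro m ⟨r, h, rfl⟩
          exact ⟨-r, fun g hg => h g (by rwa [MonoidAlgebra.coeff_neg, Finsupp.support_neg] at hg),
            by rw [MulOpposite.op_neg, neg_smul]⟩ } with hVt
    have hV : (⨆ (s : T) (_ : s ≠ t), orbitTranslate R G M a RH (s : G)) ≤ Vt := by
      refine iSup_le fun s => iSup_le fun hst => ?_
      intro m hm
      obtain ⟨x, hx, rfl⟩ := (hUmem' _ m).1 hm
      refine ⟨x * MonoidAlgebra.single (s : G) 1, fun g hg => ?_,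
        by rw [MonoidAlgebra.of_apply]⟩
      rw [Finsupp.mem_support_iff, MonoidAlgebra.coeff_mul_single_apply, mul_one] at hg
      have hgs : g * (s : G)⁻¹ ∈ H := (hRHmem x).1 hx _ (Finsupp.mem_support_iff.2 hg)
      intro hgt
      exact hst (Subtype.ext ((hcu g _ s.2 hgs).trans (hcu g _ t.2 hgt).symm))
    refine Disjoint.mono_right hV ?_
    rw [AddSubgroup.disjoint_def]
    intro m hm1 hm2
    obtain ⟨x, hx, rfl⟩ := (hUmem' _ m).1 hm1
    obtain ⟨r, hrs, hm⟩ := hm2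
    have hd : MulOpposite.op (x * MonoidAlgebra.single (t : G) 1 - r) • a = 0 := by
      rw [MulOpposite.op_sub, sub_smul, ← MonoidAlgebra.of_apply, ← hm, sub_self]
    have h1 := hIr _ hd (t : G)
    rw [cproj_sub, cproj_eq_zero H (t : G) r hrs, sub_zero, cproj_eq_self] at h1
    · rw [MonoidAlgebra.of_apply]
      exact h1
    · intro g hg
      rw [Finsupp.mem_support_iff, MonoidAlgebra.coeff_mul_single_apply, mul_one] at hg
      exact (hRHmem x).1 hx _ (Finsupp.mem_support_iff.2 hg)
  · -- direct sum implies control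
    rintro ⟨hind, -⟩
    apply Set.Subset.antisymm
    · intro r hr
      have hr0 : MulOpposite.op r • a = 0 := hr
      have hsum : ∑ t ∈ r.coeff.support.image c, MulOpposite.op (cproj H t r) • a = 0 := by
        rw [← Finset.sum_smul, ← Finset.op_sum, hdecomp r, hr0]
      have hzero : ∀ t ∈ r.coeff.support.image c, MulOpposite.op (cproj H t r) • a = 0 := by
        intro t₀ ht₀
        obtain ⟨g', _, rfl⟩ := Finset.mem_image.1 ht₀
        have hadd : MulOpposite.op (cproj H (c g') r) • a +
            ∑ t ∈ (r.coeff.support.image c).erase (c g'), MulOpposite.op (cproj H t r) • a = 0 := by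
          rw [← Finset.add_sum_erase _ _ ht₀] at hsum
          exact hsum
        have heq := eq_neg_of_add_eq_zero_left hadd
        have hmem1 : MulOpposite.op (cproj H (c g') r) • a ∈
            orbitTranslate R G M a RH (((⟨c g', hcT g'⟩ : T) : G)) := hUmem _ r
        have hmem2 : MulOpposite.op (cproj H (c g') r) • a ∈
            ⨆ (s : T) (_ : s ≠ (⟨c g', hcT g'⟩ : T)), orbitTranslate R G M a RH (s : G) := by
          rw [heq]
          refine neg_mem (AddSubgroup.sum_mem _ fun t ht => ?_)
          obtain ⟨hne, htS⟩ := Finset.mem_erase.1 ht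
          obtain ⟨g'', _, rfl⟩ := Finset.mem_image.1 htS
          exact le_iSup₂ (f := fun (s : T) (_ : s ≠ (⟨c g', hcT g'⟩ : T)) =>
              orbitTranslate R G M a RH (s : G))
            (⟨c g'', hcT g''⟩ : T) (fun h => hne (congrArg Subtype.val h)) (hUmem _ r)
        exact AddSubgroup.disjoint_def.1 (iSupIndep_def.1 hind ⟨c g', hcT g'⟩) hmem1 hmem2
      have h4 : ∑ t ∈ r.coeff.support.image c, cproj H t r ∈ Submodule.span Aᵐᵒᵖ
          ({r : A | MulOpposite.op r • a = 0} ∩ (RH : Set A)) := by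
        refine Submodule.sum_mem _ fun t ht => ?_
        have h5 : MulOpposite.op (cproj H t r) • a = 0 := hzero t ht
        have hx0 : MulOpposite.op (cproj H t r * MonoidAlgebra.single t⁻¹ (1 : R)) • a = 0 := by
          rw [MulOpposite.op_mul, mul_smul, h5, smul_zero]
        have hx2 := Submodule.subset_span (R := Aᵐᵒᵖ)
          (s := {r : A | MulOpposite.op r • a = 0} ∩ (RH : Set A))
          ⟨hx0, hsupp_single t r⟩
        have h6 : cproj H t r = MulOpposite.op (MonoidAlgebra.single t (1 : R)) •
            (cproj H t r * MonoidAlgebra.single t⁻¹ (1 : R)) := hfactor t r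
        rw [h6]
        exact Submodule.smul_mem _ _ hx2
      exact SetLike.mem_coe.2 (hdecomp r ▸ h4)
    · have hle : Submodule.span Aᵐᵒᵖ
          ({r : A | MulOpposite.op r • a = 0} ∩ (RH : Set A)) ≤ Iann :=
        Submodule.span_le.2 Set.inter_subset_left
      intro r hr
      exact hle hr
end
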